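/- Let a < 0, b ∈ (−1,1), and let w solve w'' = (1/2)(tw' − w)(1 − (w')²) with w(0) = a, w'(0) = b on a maximal interval where |w'| < 1. Suppose tw'(t) − w(t) ≥ −a for all t ≥ 0 in the existence interval. Then (tanh⁻¹ w')'(t) = (1/2)(tw'(t) − w(t)) ≥ −a/2, hence w'(t) ≥ tanh(−(a/2)t + tanh⁻¹ b) for all t ≥ 0 in the existence interval. -/

import Mathlib

open Set

/-- The inverse hyperbolic tangent on `(-1, 1)`. -/
noncomputable def artanh (x : ℝ) : ℝ := (1 / 2) * Real.log ((1 + x) / (1 - x))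

lemma tanh_eq_exp (x : ℝ) : Real.tanh x = (Real.exp (2 * x) - 1) / (Real.exp (2 * x) + 1) := by
  rw [Real.tanh_eq_sinh_div_cosh, Real.sinh_eq, Real.cosh_eq]
  have h1 : Real.exp (2 * x) = Real.exp x * Real.exp x := by
    rw [← Real.exp_add]; ring_nf
  have h2 : Real.exp x ≠ 0 := (Real.exp_pos x).ne'
  have h3 : Real.exp (-x) = (Real.exp x)⁻¹ := Real.exp_neg x
  rw [h1, h3]
  have h4 : Real.exp x + (Real.exp x)⁻¹ > 0 := by positivity
  field_simp

lemma tanh_mono : Monotone Real.tanh := by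
  intro x y hxy
  rw [tanh_eq_exp, tanh_eq_exp]
  have hx : (0:ℝ) < Real.exp (2 * x) := Real.exp_pos _
  have hy : (0:ℝ) < Real.exp (2 * y) := Real.exp_pos _
  have h : Real.exp (2 * x) ≤ Real.exp (2 * y) :=
    Real.exp_le_exp.2 (by linarith)
  rw [div_le_div_iff₀ (by linarith) (by linarith)]
  nlinarith

lemma tanh_artanh {x : ℝ} (hx : |x| < 1) : Real.tanh (artanh x) = x := by
  rw [abs_lt] at hx
  have h1 : (0:ℝ) < 1 + x := by linarith
  have h2 : (0:ℝ) < 1 - x := by linarith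
  have hr : (0:ℝ) < (1 + x) / (1 - x) := div_pos h1 h2
  have he : Real.exp (2 * artanh x) = (1 + x) / (1 - x) := by
    rw [artanh]
    rw [show 2 * ((1:ℝ) / 2 * Real.log ((1 + x) / (1 - x))) = Real.log ((1 + x) / (1 - x)) by ring]
    exact Real.exp_log hr
  rw [tanh_eq_exp, he]
  field_simp
  ring

lemma hasDerivAt_artanh {x : ℝ} (hx : |x| < 1) :
    HasDerivAt artanh (1 / (1 - x ^ 2)) x := by
  rw [abs_lt] at hx
  have h1 : (0:ℝ) < 1 + x := by linarith
  have h2 : (0:ℝ) < 1 - x := by linarith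
  have hu : HasDerivAt (fun y : ℝ => (1 + y) / (1 - y))
      ((1 * (1 - x) - (1 + x) * (-1)) / (1 - x) ^ 2) x := by
    exact (((hasDerivAt_id x).const_add 1)).div ((hasDerivAt_id x).const_sub 1) h2.ne'
  have hlog := (hu.log (div_pos h1 h2).ne').const_mul (1/2 : ℝ)
  have hne : (1 - x ^ 2) ≠ 0 := by nlinarith
  refine hlog.congr_deriv ?_
  field_simp
  ring

theorem stmt11 (a b T₂ : ℝ) (ha : a < 0) (hb : b ∈ Set.Ioo (-1 : ℝ) 1)
    (hT₂ : 0 < T₂)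
    (w dw : ℝ → ℝ)
    (hw : ∀ t ∈ Set.Ico (0 : ℝ) T₂, HasDerivAt w (dw t) t)
    (hODE : ∀ t ∈ Set.Ico (0 : ℝ) T₂,
      HasDerivAt dw ((1 / 2) * (t * dw t - w t) * (1 - (dw t) ^ 2)) t)
    (hspace : ∀ t ∈ Set.Ico (0 : ℝ) T₂, |dw t| < 1)
    (hw0 : w 0 = a) (hdw0 : dw 0 = b)
    (hphi : ∀ t ∈ Set.Ico (0 : ℝ) T₂, -a ≤ t * dw t - w t) :
    (∀ t ∈ Set.Ico (0 : ℝ) T₂,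
      HasDerivAt (fun s => artanh (dw s)) ((1 / 2) * (t * dw t - w t)) t ∧
      -a / 2 ≤ (1 / 2) * (t * dw t - w t)) ∧
    (∀ t ∈ Set.Ico (0 : ℝ) T₂,
      Real.tanh (-(a / 2) * t + artanh b) ≤ dw t) := by
  have key : ∀ t ∈ Set.Ico (0 : ℝ) T₂,
      HasDerivAt (fun s => artanh (dw s)) ((1 / 2) * (t * dw t - w t)) t := by
    intro t ht
    have h1 : 1 - (dw t) ^ 2 ≠ 0 := by
      have := hspace t ht
      rw [abs_lt] at this
      nlinarith
    have := (hasDerivAt_artanh (hspace t ht)).comp t (hODE t ht)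
    refine this.congr_deriv ?_
    field_simp
  have lb : ∀ t ∈ Set.Ico (0 : ℝ) T₂, -a / 2 ≤ (1 / 2) * (t * dw t - w t) := by
    intro t ht
    have := hphi t ht
    linarith
  refine ⟨fun t ht => ⟨key t ht, lb t ht⟩, ?_⟩
  -- monotone function g t = artanh (dw t) + (a/2) * t
  intro t ht
  set g : ℝ → ℝ := fun s => artanh (dw s) + (a / 2) * s with hg
  have hgderiv : ∀ s ∈ Set.Ico (0 : ℝ) T₂,
      HasDerivAt g ((1 / 2) * (s * dw s - w s) + a / 2) s := by
    intro s hs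
    have := (key s hs).add ((hasDerivAt_id s).const_mul (a/2))
    exact this.congr_deriv (by ring)
  have hmono : MonotoneOn g (Set.Ico (0 : ℝ) T₂) := by
    apply monotoneOn_of_hasDerivWithinAt_nonneg (convex_Ico 0 T₂)
      (fun s hs => (hgderiv s hs).continuousAt.continuousWithinAt)
      (f' := fun s => (1 / 2) * (s * dw s - w s) + a / 2)
    · intro s hs
      rw [interior_Ico] at hs
      exact (hgderiv s ⟨le_of_lt hs.1, hs.2⟩).hasDerivWithinAt
    · intro s hs
      rw [interior_Ico] at hs
      have := lb s ⟨le_of_lt hs.1, hs.2⟩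
      linarith
  have h0 : (0:ℝ) ∈ Set.Ico (0 : ℝ) T₂ := ⟨le_refl 0, hT₂⟩
  have := hmono h0 ht ht.1
  have hg0 : g 0 = artanh b := by simp [hg, hdw0]
  have hineq : -(a / 2) * t + artanh b ≤ artanh (dw t) := by
    have : artanh b ≤ artanh (dw t) + (a / 2) * t := by
      rw [← hg0]; exact this
    linarith
  calc Real.tanh (-(a / 2) * t + artanh b) ≤ Real.tanh (artanh (dw t)) := tanh_mono hineq
    _ = dw t := tanh_artanh (hspace t ht)
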